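/- Let g(z) = a·z² + b·z + c and λ ∈ ℂ with |λ| > 2|a|. Then there is a constant C (depending on m, a, b, λ) such that for every entire function f, sup_{z∈ℂ} |exp(g(z)/λ)·f(z)|·exp(−ψ_m(z)) ≤ C·( |f(0)| + sup_{z∈ℂ} |exp(g(z)/λ)|·|f'(z)|·exp(−ψ_m(z))/(1 + ψ_m'(|z|)) ). -/

import Mathlib

/-- The weight function ψ_m(z) = |z|²/2 − m·log(1+|z|). -/
noncomputable def psi (m : ℕ) (z : ℂ) : ℝ :=
  ‖z‖ ^ 2 / 2 - m * Real.log (1 + ‖z‖)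

/-- ψ_m'(r) = r − m/(1+r). -/
noncomputable def psi' (m : ℕ) (r : ℝ) : ℝ := r - m / (1 + r)

lemma stmt7_deriv_entire {f : ℂ → ℂ} (hf : Differentiable ℂ f) : Differentiable ℂ (deriv f) := by
  have h1 : AnalyticOnNhd ℂ f Set.univ := hf.differentiableOn.analyticOnNhd isOpen_univ
  exact fun z => (h1.deriv z trivial).differentiableAt

lemma stmt7_ftc {f : ℂ → ℂ} (hf : Differentiable ℂ f) (z : ℂ) :
    f z = f 0 + ∫ t in (0:ℝ)..1, z * deriv f ((t:ℂ) * z) := by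
  have key : ∀ t ∈ Set.uIcc (0:ℝ) 1, HasDerivAt (fun s : ℝ => f ((s:ℂ) * z))
      (z * deriv f ((t:ℂ) * z)) t := by
    intro t _
    have h1 : HasDerivAt (fun w : ℂ => f (w * z)) (deriv f ((t:ℂ) * z) * z) ((t:ℂ)) := by
      have hg : HasDerivAt (fun w : ℂ => w * z) z ((t:ℂ)) := by
        simpa using (hasDerivAt_id ((t:ℂ))).mul_const z
      exact ((hf ((t:ℂ)*z)).hasDerivAt.comp ((t:ℂ)) hg)
    have := h1.comp_ofReal
    simpa [mul_comm] using this
  have hcont : IntervalIntegrable (fun t : ℝ => z * deriv f ((t:ℂ)*z)) MeasureTheory.volume 0 1 := by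
    apply Continuous.intervalIntegrable
    exact continuous_const.mul ((stmt7_deriv_entire hf).continuous.comp (by continuity))
  have := intervalIntegral.integral_eq_sub_of_hasDerivAt key hcont
  rw [intervalIntegral.integral_const_mul] at this
  rw [intervalIntegral.integral_const_mul, this]; push_cast; ring_nf

lemma stmt7_maxmod {g : ℂ → ℂ} (hg : Differentiable ℂ g) {R C : ℝ} (hR : 0 < R)
    (hb : ∀ w : ℂ, ‖w‖ = R → ‖g w‖ ≤ C) :
    ∀ w : ℂ, ‖w‖ ≤ R → ‖g w‖ ≤ C := by
  intro w hw
  have := Complex.norm_le_of_forall_mem_frontier_norm_le (U := Metric.ball (0:ℂ) R)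
    Metric.isBounded_ball hg.diffContOnCl (C := C) ?_ (z := w) ?_
  · simpa using this
  · intro x hx
    rw [frontier_ball _ hR.ne'] at hx
    simp only [Metric.mem_sphere, Complex.dist_eq, sub_zero] at hx
    simpa using hb x hx
  · rw [closure_ball _ hR.ne']
    simp [Complex.dist_eq, hw]

lemma stmt7_int_exp {c t₀ : ℝ} (hc : 0 < c) :
    ∫ t in t₀..1, Real.exp (c*(t-1)) ≤ 1/c := by
  have key : ∀ t ∈ Set.uIcc t₀ 1, HasDerivAt (fun s : ℝ => Real.exp (c*(s-1))/c)
      (Real.exp (c*(t-1))) t := by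
    intro t _
    have h1 : HasDerivAt (fun s : ℝ => c*(s-1)) c t := by
      simpa using ((hasDerivAt_id t).sub_const 1).const_mul c
    have := (h1.exp).div_const c
    simpa [mul_comm, mul_div_assoc, mul_div_cancel_left₀ _ hc.ne'] using this
  have hint : IntervalIntegrable (fun t : ℝ => Real.exp (c*(t-1))) MeasureTheory.volume t₀ 1 :=
    (Real.continuous_exp.comp (by continuity)).intervalIntegrable _ _
  rw [intervalIntegral.integral_eq_sub_of_hasDerivAt key hint]
  rw [show c*((1:ℝ)-1) = 0 by ring, Real.exp_zero]
  rw [div_sub_div_same, div_le_div_iff₀ hc hc]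
  nlinarith [Real.exp_pos (c*(t₀-1))]

lemma stmt7_exp_cancel (X p q : ℝ) :
    Real.exp p * X * Real.exp (-q) * Real.exp (q - p) = X := by
  have h : Real.exp p * Real.exp (-q) * Real.exp (q - p) = 1 := by
    rw [← Real.exp_add, ← Real.exp_add, show p + -q + (q - p) = 0 by ring, Real.exp_zero]
  linear_combination X * h

lemma stmt7_exp_mul (p q X : ℝ) :
    Real.exp p * X * Real.exp (-q) = X * Real.exp (p - q) := by
  have h : Real.exp p * Real.exp (-q) = Real.exp (p - q) := by
    rw [← Real.exp_add, sub_eq_add_neg]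
  linear_combination X * h

lemma stmt7_exp_div (Y c p q : ℝ) :
    (Y * Real.exp (p - q))/c * Real.exp (q - p) = Y/c := by
  have h : Real.exp (p - q) * Real.exp (q - p) = 1 := by
    rw [← Real.exp_add, show p - q + (q - p) = 0 by ring, Real.exp_zero]
  rw [div_mul_eq_mul_div]
  have h2 : Y * Real.exp (p - q) * Real.exp (q - p) = Y := by linear_combination Y * h
  rw [h2]

lemma stmt7_arith (t r q δ β mm L1 L2 A B : ℝ)
    (hδ : 0 < δ) (htpos : 0 < t) (h2 : t ≤ 1) (hrpos : 0 < r)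
    (hkey : β + q ≤ δ*r/2)
    (hg : A - B ≤ (1/2-δ)*(1-t^2)*r^2 + β*(1-t)*r)
    (hmlog : mm * L2 - mm * L1 ≤ q*((1-t)*r)) :
    (t*r)^2/2 - mm*L1 - B ≤ r^2/2 - mm*L2 - A - (1-t)*(δ*r^2/2) := by
  linarith [hg, hmlog,
    mul_nonneg (mul_nonneg (by linarith : (0:ℝ) ≤ 1-t) hrpos.le)
      (by linarith : (0:ℝ) ≤ δ*r/2 - (β + q)),
    mul_nonneg (mul_nonneg (mul_nonneg hδ.le htpos.le)
      (by linarith : (0:ℝ) ≤ 1-t)) (sq_nonneg r)]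

lemma stmt7_combine {E D G F S : ℝ} (hE : 0 < E) (hD : 0 ≤ D) (hG : 0 ≤ G)
    (hF : 0 ≤ F) (hS : 0 ≤ S) :
    (F + D*S)*E + G*S ≤ (E*(1+D) + G + 1)*(F+S) := by
  nlinarith [mul_nonneg (mul_nonneg hE.le hD) hF, mul_nonneg hE.le hS, mul_nonneg hG hF]

set_option maxHeartbeats 1000000 in
/-- For g(z) = az²+bz+c and |λ| > 2|a|, there is C > 0 such that for every entire f:
sup_z |e^{g(z)/λ} f(z)|·e^{−ψ_m(z)} ≤ C·(|f(0)| + sup_z |e^{g(z)/λ}|·|f'(z)|·e^{−ψ_m(z)}/(1+ψ_m'(|z|))). -/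
theorem stmt_7 (m : ℕ) (a b c lam : ℂ) (hlam : 2 * ‖a‖ < ‖lam‖) :
    ∃ C > (0 : ℝ), ∀ f : ℂ → ℂ, Differentiable ℂ f → ∀ S : ℝ,
      (∀ w : ℂ, ‖Complex.exp ((a * w ^ 2 + b * w + c) / lam)‖ *
          ‖deriv f w‖ * Real.exp (-psi m w) / (1 + psi' m (‖w‖)) ≤ S) →
      ∀ z : ℂ, ‖Complex.exp ((a * z ^ 2 + b * z + c) / lam) * f z‖ *
          Real.exp (-psi m z) ≤ C * (‖f 0‖ + S) := by
  set L := ‖lam‖ with hLdef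
  have hL0 : 0 < L := lt_of_le_of_lt (by positivity) hlam
  set α := ‖a‖ / L with hαdef
  set β := ‖b‖ / L with hβdef
  set γ := ‖c‖ / L with hγdef
  set δ := 1/2 - α with hδdef
  have hα0 : 0 ≤ α := by positivity
  have hβ0 : 0 ≤ β := by positivity
  have hγ0 : 0 ≤ γ := by positivity
  have hδ : 0 < δ := by
    rw [hδdef, hαdef, sub_pos, div_lt_iff₀ hL0]
    linarith
  have hαδ : α = 1/2 - δ := by rw [hδdef]; ring
  set R := (m:ℝ) + 1 + (2*β + 2*(m:ℝ) + 2)/δ with hRdef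
  have hRm : (m:ℝ) + 1 ≤ R := by
    rw [hRdef]
    have : 0 ≤ (2*β + 2*(m:ℝ) + 2)/δ := by positivity
    linarith
  have hR1 : 1 ≤ R := le_trans (by linarith [Nat.cast_nonneg (α := ℝ) m]) hRm
  have hRpos : 0 < R := lt_of_lt_of_le one_pos hR1
  have hδR : 2*β + 2*(m:ℝ) + 2 ≤ δ * R := by
    have h1 : δ * ((2*β + 2*(m:ℝ) + 2)/δ) = 2*β + 2*(m:ℝ) + 2 := by
      field_simp
    rw [hRdef, mul_add δ ((m:ℝ)+1) _, h1]
    nlinarith [mul_nonneg hδ.le (by positivity : (0:ℝ) ≤ (m:ℝ) + 1)]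
  have hmR : (m:ℝ)/R ≤ (m:ℝ) := by
    rw [div_le_iff₀ hRpos]; nlinarith [Nat.cast_nonneg (α := ℝ) m]
  have hmR0 : 0 ≤ (m:ℝ)/R := by positivity
  set lnM := γ + (β + (m:ℝ))^2/(4*δ) with hlnMdef
  set K₁ := (1+R) * Real.exp (R^2/2 + α*R^2 + β*R + γ) with hK₁def
  have hK₁ : 0 < K₁ := by rw [hK₁def]; positivity
  set C := Real.exp lnM * (1 + R*K₁) + 4/δ + 1 with hCdef
  have hexpM : 0 < Real.exp lnM := Real.exp_pos _
  have h4δ : 0 < 4/δ := by positivity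
  have hC0 : 0 < C := by
    rw [hCdef]
    have h1 : 0 < 1 + R*K₁ := by nlinarith [mul_pos hRpos hK₁]
    nlinarith [mul_pos hexpM h1]
  clear_value L α γ β δ R lnM K₁ C
  -- bound on the real part of g(w)/lam
  have hre : ∀ w : ℂ, |((a*w^2+b*w+c)/lam).re| ≤
      α * (‖w‖)^2 + β * ‖w‖ + γ := by
    intro w
    refine (Complex.abs_re_le_norm _).trans ?_
    rw [norm_div, ← hLdef]
    have h1 : ‖a*w^2+b*w+c‖ ≤
        ‖a‖ * (‖w‖)^2 + ‖b‖ * ‖w‖ + ‖c‖ := by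
      calc ‖a*w^2+b*w+c‖ ≤ ‖a*w^2+b*w‖ + ‖c‖ :=
            norm_add_le _ _
        _ ≤ ‖a*w^2‖ + ‖b*w‖ + ‖c‖ := by
            have := norm_add_le (a*w^2) (b*w); linarith
        _ = ‖a‖ * (‖w‖)^2 + ‖b‖ * ‖w‖ + ‖c‖ := by
            simp [norm_mul, norm_pow]
    calc ‖a*w^2+b*w+c‖ / L
        ≤ (‖a‖ * (‖w‖)^2 + ‖b‖ * ‖w‖ + ‖c‖) / L := by
          gcongr
      _ = α * (‖w‖)^2 + β * ‖w‖ + γ := by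
          rw [hαdef, hβdef, hγdef]; ring
  -- lower bound on psi
  have hpsi_lb : ∀ w : ℂ, (‖w‖)^2/2 - m * ‖w‖ ≤ psi m w := by
    intro w
    have h1 : Real.log (1 + ‖w‖) ≤ ‖w‖ := by
      have := Real.log_le_sub_one_of_pos (x := 1 + ‖w‖) (by positivity)
      linarith
    have h2 : (0:ℝ) ≤ m := Nat.cast_nonneg m
    unfold psi
    linarith [mul_le_mul_of_nonneg_left h1 h2]
  -- global bound exp(h - psi) ≤ exp lnM
  have hM : ∀ w : ℂ, ((a*w^2+b*w+c)/lam).re - psi m w ≤ lnM := by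
    intro w
    have h1 := (abs_le.mp (hre w)).2
    have h2 := hpsi_lb w
    have hr0 : 0 ≤ ‖w‖ := norm_nonneg w
    rw [hαδ] at h1
    have h3 : ((a*w^2+b*w+c)/lam).re - psi m w ≤
        -δ*(‖w‖)^2 + (β+(m:ℝ))*(‖w‖) + γ := by linarith
    have h4 : -δ*(‖w‖)^2 + (β+(m:ℝ))*(‖w‖) ≤ (β+(m:ℝ))^2/(4*δ) := by
      rw [le_div_iff₀ (by linarith : (0:ℝ) < 4*δ)]
      linarith [sq_nonneg (2*δ*(‖w‖) - (β+(m:ℝ)))]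
    rw [hlnMdef]
    linarith
  refine ⟨C, hC0, ?_⟩
  intro f hf S hS
  have hf' : Differentiable ℂ (deriv f) := stmt7_deriv_entire hf
  -- rewrite hypothesis
  have hS' : ∀ w : ℂ, 0 < 1 + psi' m (‖w‖) →
      Real.exp (((a*w^2+b*w+c)/lam).re) * ‖deriv f w‖ * Real.exp (-psi m w) ≤
        S * (1 + psi' m (‖w‖)) := by
    intro w hw
    have h := hS w
    rw [Complex.norm_exp] at h
    exact (div_le_iff₀ hw).mp h
  -- S is nonnegative
  have hS0 : 0 ≤ S := by
    have habsR : ‖((R:ℝ):ℂ)‖ = R := by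
      rw [Complex.norm_real, Real.norm_eq_abs]; exact abs_of_nonneg hRpos.le
    have h := hS ((R:ℝ):ℂ)
    rw [habsR] at h
    have hd : 0 < 1 + psi' m R := by
      unfold psi'
      have h5 : (m:ℝ)/(1+R) ≤ (m:ℝ) := by
        rw [div_le_iff₀ (by linarith)]
        linarith [mul_nonneg (Nat.cast_nonneg (α := ℝ) m) hRpos.le]
      linarith
    refine le_trans ?_ h
    have h6 : (0:ℝ) ≤ ‖Complex.exp ((a * ((R:ℝ):ℂ) ^ 2 + b * ((R:ℝ):ℂ) + c) / lam)‖ *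
        ‖deriv f ((R:ℝ):ℂ)‖ * Real.exp (-psi m ((R:ℝ):ℂ)) := by positivity
    exact div_nonneg h6 hd.le
  -- pointwise bound on deriv f for large |w|
  have hS1 : ∀ w : ℂ, R ≤ ‖w‖ → ‖deriv f w‖ ≤
      S * (1 + ‖w‖) * Real.exp (psi m w - ((a*w^2+b*w+c)/lam).re) := by
    intro w hw
    have hr0 : 0 ≤ ‖w‖ := norm_nonneg w
    have hd1 : (m:ℝ)/(1+‖w‖) ≤ (m:ℝ) := by
      rw [div_le_iff₀ (by linarith)]
      linarith [mul_nonneg (Nat.cast_nonneg (α := ℝ) m) hr0]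
    have hd0 : 0 ≤ (m:ℝ)/(1+‖w‖) := by positivity
    have hdpos : 0 < 1 + psi' m (‖w‖) := by
      unfold psi'; linarith
    have hdle : 1 + psi' m (‖w‖) ≤ 1 + ‖w‖ := by unfold psi'; linarith
    have h1 := hS' w hdpos
    have h2 : Real.exp (((a*w^2+b*w+c)/lam).re) * ‖deriv f w‖ *
        Real.exp (-psi m w) ≤ S * (1 + ‖w‖) :=
      h1.trans (mul_le_mul_of_nonneg_left hdle hS0)
    have h3 := mul_le_mul_of_nonneg_right h2
      (Real.exp_nonneg (psi m w - ((a*w^2+b*w+c)/lam).re))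
    calc ‖deriv f w‖
        = Real.exp (((a*w^2+b*w+c)/lam).re) * ‖deriv f w‖ * Real.exp (-psi m w) *
            Real.exp (psi m w - ((a*w^2+b*w+c)/lam).re) :=
          (stmt7_exp_cancel _ _ _).symm
      _ ≤ S * (1 + ‖w‖) * Real.exp (psi m w - ((a*w^2+b*w+c)/lam).re) := h3
  -- bound on deriv f on the disc of radius R (max modulus)
  have hK : ∀ w : ℂ, ‖w‖ ≤ R → ‖deriv f w‖ ≤ S * K₁ := by
    apply stmt7_maxmod hf' hRpos
    intro w hw
    refine (hS1 w hw.ge).trans ?_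
    rw [hw, hK₁def]
    have h1 : psi m w - ((a*w^2+b*w+c)/lam).re ≤ R^2/2 + α*R^2 + β*R + γ := by
      have hlog : 0 ≤ Real.log (1 + R) := Real.log_nonneg (by linarith)
      have h2 : psi m w ≤ R^2/2 := by
        unfold psi; rw [hw]
        linarith [mul_nonneg (Nat.cast_nonneg (α := ℝ) m) hlog]
      have h3 := (abs_le.mp (hre w)).1
      rw [hw] at h3
      linarith
    linarith [mul_le_mul_of_nonneg_left (Real.exp_le_exp.mpr h1)
      (mul_nonneg hS0 (by linarith : (0:ℝ) ≤ 1+R))]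
  -- main estimate
  intro z
  have hr0 : 0 ≤ ‖z‖ := norm_nonneg z
  rw [norm_mul, Complex.norm_exp]
  set φ : ℝ → ℝ := fun t => ‖z * deriv f ((t:ℂ)*z)‖ with hφdef
  have hφcont : Continuous φ := by
    apply continuous_norm.comp
    exact continuous_const.mul
      (hf'.continuous.comp (Complex.continuous_ofReal.mul continuous_const))
  clear_value φ
  have hInt : ‖f z‖ ≤ ‖f 0‖ + ∫ t in (0:ℝ)..1, φ t := by
    rw [stmt7_ftc hf z]
    refine (norm_add_le _ _).trans ?_
    gcongr
    have := intervalIntegral.norm_integral_le_integral_norm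
      (f := fun t : ℝ => z * deriv f ((t:ℂ)*z)) (a := 0) (b := 1)
      (μ := MeasureTheory.volume) zero_le_one
    simpa [hφdef] using this
  have hφ0 : ∀ t : ℝ, 0 ≤ t → φ t = ‖z‖ * ‖deriv f ((t:ℂ)*z)‖ := by
    intro t ht
    rw [hφdef]; simp [norm_mul]
  have habs_tz : ∀ t : ℝ, 0 ≤ t → ‖(t:ℂ)*z‖ = t * ‖z‖ := by
    intro t ht
    rw [norm_mul, Complex.norm_real, Real.norm_eq_abs, abs_of_nonneg ht]
  have hexp_eq : Real.exp (((a*z^2+b*z+c)/lam).re) * ‖f z‖ * Real.exp (-psi m z)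
      = ‖f z‖ * Real.exp (((a*z^2+b*z+c)/lam).re - psi m z) :=
    stmt7_exp_mul _ _ _
  have hMz : Real.exp (((a*z^2+b*z+c)/lam).re - psi m z) ≤ Real.exp lnM :=
    Real.exp_le_exp.mpr (hM z)
  have habsf0 : (0:ℝ) ≤ ‖f 0‖ := norm_nonneg _
  by_cases hz : ‖z‖ ≤ R
  · -- small |z|
    have hbd : ∀ t ∈ Set.Icc (0:ℝ) 1, φ t ≤ ‖z‖ * (S * K₁) := by
      intro t ht
      rw [hφ0 t ht.1]
      have h7 : ‖(t:ℂ)*z‖ ≤ R := by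
        rw [habs_tz t ht.1]
        calc t * ‖z‖ ≤ 1 * ‖z‖ :=
              mul_le_mul_of_nonneg_right ht.2 hr0
          _ ≤ R := by linarith
      exact mul_le_mul_of_nonneg_left (hK _ h7) hr0
    have hIb : ∫ t in (0:ℝ)..1, φ t ≤ ‖z‖ * (S * K₁) := by
      have := intervalIntegral.integral_mono_on (a := (0:ℝ)) (b := 1) zero_le_one
        (hφcont.intervalIntegrable _ _) (intervalIntegrable_const (μ := MeasureTheory.volume)) hbd
      simpa using this
    have hfz : ‖f z‖ ≤ ‖f 0‖ + R * (S * K₁) := by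
      have h8 : ‖z‖ * (S * K₁) ≤ R * (S * K₁) :=
        mul_le_mul_of_nonneg_right hz (mul_nonneg hS0 hK₁.le)
      linarith
    rw [hexp_eq]
    have step1 : ‖f z‖ * Real.exp (((a*z^2+b*z+c)/lam).re - psi m z)
        ≤ (‖f 0‖ + R * (S * K₁)) * Real.exp lnM :=
      mul_le_mul hfz hMz (Real.exp_nonneg _)
        (add_nonneg habsf0 (mul_nonneg hRpos.le (mul_nonneg hS0 hK₁.le)))
    have step2 := stmt7_combine hexpM (mul_nonneg hRpos.le hK₁.le) h4δ.le habsf0 hS0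
    rw [hCdef]
    linarith [step1, step2, mul_nonneg h4δ.le hS0]
  · -- large |z|
    push_neg at hz
    have hrpos : 0 < ‖z‖ := lt_trans hRpos hz
    set r := ‖z‖ with hrdef
    clear_value r
    set t₀ := R / r with ht₀def
    have ht₀pos : 0 < t₀ := div_pos hRpos hrpos
    have ht₀1 : t₀ ≤ 1 := by rw [ht₀def, div_le_one hrpos]; exact hz.le
    set c' := δ * r^2 / 2 with hc'def
    have hc' : 0 < c' := by
      rw [hc'def]
      linarith [mul_pos hδ (pow_pos hrpos 2)]
    have hkey : β + (m:ℝ)/R ≤ δ*r/2 := by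
      have h1 : δ*R ≤ δ*r := mul_le_mul_of_nonneg_left hz.le hδ.le
      linarith [hmR, hδR]
    -- the exponent inequality
    have hEL : ∀ t : ℝ, t₀ ≤ t → t ≤ 1 →
        psi m ((t:ℂ)*z) - ((a*((t:ℂ)*z)^2+b*((t:ℂ)*z)+c)/lam).re ≤
          (psi m z - ((a*z^2+b*z+c)/lam).re) - (1-t)*c' := by
      intro t h1 h2
      have htpos : 0 < t := lt_of_lt_of_le ht₀pos h1
      have htr : R ≤ t*r := by
        rw [ht₀def] at h1
        exact (div_le_iff₀ hrpos).mp h1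
      have habs : ‖(t:ℂ)*z‖ = t * r := by rw [habs_tz t htpos.le, hrdef]
      -- log estimate
      have hlog : Real.log (1+r) ≤ Real.log (1+t*r) + (1-t)*r/R := by
        have l1 : Real.log (t*(1+r)) = Real.log t + Real.log (1+r) :=
          Real.log_mul htpos.ne' (by positivity)
        have l2 : Real.log (t*(1+r)) ≤ Real.log (1+t*r) := by
          apply Real.log_le_log (by positivity)
          linarith
        have l3 : -Real.log t ≤ (1-t)/t := by
          have h9 := Real.log_le_sub_one_of_pos (x := t⁻¹) (by positivity)
          rw [Real.log_inv] at h9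
          have ht' : t⁻¹ - 1 = (1-t)/t := by field_simp
          linarith [ht' ▸ h9]
        have l4 : (1-t)/t ≤ (1-t)*r/R := by
          rw [div_le_div_iff₀ htpos hRpos]
          linarith [mul_le_mul_of_nonneg_left htr (by linarith : (0:ℝ) ≤ 1-t)]
        linarith
      -- real part estimate
      have hg : ((a*z^2+b*z+c)/lam).re - ((a*((t:ℂ)*z)^2+b*((t:ℂ)*z)+c)/lam).re ≤
          (1/2-δ)*(1-t^2)*r^2 + β*(1-t)*r := by
        have e1 : ((a*z^2+b*z+c)/lam).re - ((a*((t:ℂ)*z)^2+b*((t:ℂ)*z)+c)/lam).re =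
            (((a*z^2+b*z+c) - (a*((t:ℂ)*z)^2+b*((t:ℂ)*z)+c))/lam).re := by
          rw [sub_div, Complex.sub_re]
        rw [e1]
        refine (Complex.re_le_norm _).trans ?_
        rw [norm_div, ← hLdef]
        have e2 : (a*z^2+b*z+c) - (a*((t:ℂ)*z)^2+b*((t:ℂ)*z)+c) =
            a*z^2*(1-(t:ℂ)^2) + b*z*(1-(t:ℂ)) := by ring
        rw [e2]
        have e3 : ‖1-(t:ℂ)^2‖ = 1 - t^2 := by
          rw [show (1:ℂ)-(t:ℂ)^2 = ((1-t^2 : ℝ) : ℂ) by push_cast; ring,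
            Complex.norm_real, Real.norm_eq_abs, abs_of_nonneg (by linarith [mul_nonneg (by linarith : (0:ℝ) ≤ 1-t) (by linarith : (0:ℝ) ≤ 1+t)])]
        have e4 : ‖1-(t:ℂ)‖ = 1 - t := by
          rw [show (1:ℂ)-(t:ℂ) = ((1-t : ℝ) : ℂ) by push_cast; ring,
            Complex.norm_real, Real.norm_eq_abs, abs_of_nonneg (by linarith)]
        have h5 : ‖a*z^2*(1-(t:ℂ)^2) + b*z*(1-(t:ℂ))‖ ≤
            ‖a‖ * r^2 * (1-t^2) + ‖b‖ * r * (1-t) := by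
          refine (norm_add_le _ _).trans ?_
          rw [norm_mul, norm_mul, norm_mul, norm_mul, norm_pow, e3, e4, ← hrdef]
        calc ‖a*z^2*(1-(t:ℂ)^2) + b*z*(1-(t:ℂ))‖ / L
            ≤ (‖a‖ * r^2 * (1-t^2) + ‖b‖ * r * (1-t)) / L := by gcongr
          _ = (1/2-δ)*(1-t^2)*r^2 + β*(1-t)*r := by
              rw [← hαδ, hαdef, hβdef]; ring
      -- combine
      unfold psi
      rw [habs, ← hrdef]
      have hmlog : (m:ℝ) * Real.log (1+r) - (m:ℝ) * Real.log (1+t*r) ≤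
          ((m:ℝ)/R)*((1-t)*r) := by
        have hh := mul_le_mul_of_nonneg_left
          (by linarith [hlog] : Real.log (1+r) - Real.log (1+t*r) ≤ (1-t)*r/R)
          (Nat.cast_nonneg (α := ℝ) m)
        have he : (m:ℝ)*((1-t)*r/R) = ((m:ℝ)/R)*((1-t)*r) := by ring
        linarith [hh, he.le, he.ge]
      rw [hc'def]
      exact stmt7_arith t r ((m:ℝ)/R) δ β (m:ℝ) _ _ _ _ hδ htpos h2 hrpos hkey hg hmlog
    -- pointwise bound on φ on [t₀, 1]
    set M := S * r * (1+r) * Real.exp (psi m z - ((a*z^2+b*z+c)/lam).re) with hMdef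
    have hM0 : 0 ≤ M := by
      rw [hMdef]
      exact mul_nonneg (mul_nonneg (mul_nonneg hS0 hrpos.le) (by linarith))
        (Real.exp_nonneg _)
    have hφb2 : ∀ t ∈ Set.Icc t₀ 1, φ t ≤ M * Real.exp (c'*(t-1)) := by
      intro t ht
      have htpos : 0 < t := lt_of_lt_of_le ht₀pos ht.1
      rw [hφ0 t htpos.le]
      have habs : ‖(t:ℂ)*z‖ = t * r := by rw [habs_tz t htpos.le, hrdef]
      have hge : R ≤ ‖(t:ℂ)*z‖ := by
        rw [habs]
        rw [ht₀def] at ht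
        exact (div_le_iff₀ hrpos).mp ht.1
      have h1 := hS1 _ hge
      rw [habs] at h1
      have hA : S * (1+t*r) ≤ S * (1+r) :=
        mul_le_mul_of_nonneg_left (by linarith [mul_le_mul_of_nonneg_right ht.2 hrpos.le]) hS0
      have hB : Real.exp (psi m ((t:ℂ)*z) - ((a*((t:ℂ)*z)^2+b*((t:ℂ)*z)+c)/lam).re) ≤
          Real.exp ((psi m z - ((a*z^2+b*z+c)/lam).re) - (1-t)*c') :=
        Real.exp_le_exp.mpr (hEL t ht.1 ht.2)
      have h2 : S * (1+t*r) *
          Real.exp (psi m ((t:ℂ)*z) - ((a*((t:ℂ)*z)^2+b*((t:ℂ)*z)+c)/lam).re)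
          ≤ S * (1+r) * Real.exp ((psi m z - ((a*z^2+b*z+c)/lam).re) - (1-t)*c') := by
        exact mul_le_mul hA hB (Real.exp_nonneg _) (mul_nonneg hS0 (by linarith))
      have h3 : Real.exp ((psi m z - ((a*z^2+b*z+c)/lam).re) - (1-t)*c') =
          Real.exp (psi m z - ((a*z^2+b*z+c)/lam).re) * Real.exp (c'*(t-1)) := by
        rw [← Real.exp_add]; ring_nf
      calc r * ‖deriv f ((t:ℂ)*z)‖
          ≤ r * (S * (1+t*r) * Real.exp (psi m ((t:ℂ)*z) -
              ((a*((t:ℂ)*z)^2+b*((t:ℂ)*z)+c)/lam).re)) :=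
            mul_le_mul_of_nonneg_left h1 hrpos.le
        _ ≤ r * (S * (1+r) * Real.exp ((psi m z - ((a*z^2+b*z+c)/lam).re) - (1-t)*c')) :=
            mul_le_mul_of_nonneg_left h2 hrpos.le
        _ = M * Real.exp (c'*(t-1)) := by rw [h3, hMdef]; ring
    -- split the integral
    have hi1 : IntervalIntegrable φ MeasureTheory.volume 0 t₀ := hφcont.intervalIntegrable _ _
    have hi2 : IntervalIntegrable φ MeasureTheory.volume t₀ 1 := hφcont.intervalIntegrable _ _
    have hsplit : (∫ t in (0:ℝ)..1, φ t) = (∫ t in (0:ℝ)..t₀, φ t) + ∫ t in t₀..1, φ t :=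
      (intervalIntegral.integral_add_adjacent_intervals hi1 hi2).symm
    -- first piece
    have hI1 : (∫ t in (0:ℝ)..t₀, φ t) ≤ R * (S * K₁) := by
      have hbd : ∀ t ∈ Set.Icc (0:ℝ) t₀, φ t ≤ r * (S * K₁) := by
        intro t ht
        rw [hφ0 t ht.1]
        have h7 : ‖(t:ℂ)*z‖ ≤ R := by
          rw [habs_tz t ht.1]
          calc t * r ≤ t₀ * r := mul_le_mul_of_nonneg_right ht.2 hrpos.le
            _ = R := by rw [ht₀def]; field_simp
        exact mul_le_mul_of_nonneg_left (hK _ h7) hrpos.le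
      have h10 := intervalIntegral.integral_mono_on (a := (0:ℝ)) (b := t₀) ht₀pos.le
        (hφcont.intervalIntegrable _ _) (intervalIntegrable_const (μ := MeasureTheory.volume)) hbd
      simp only [intervalIntegral.integral_const, smul_eq_mul, sub_zero] at h10
      calc (∫ t in (0:ℝ)..t₀, φ t) ≤ t₀ * (r * (S * K₁)) := h10
        _ = R * (S * K₁) := by rw [ht₀def]; field_simp
    -- second piece
    have hI2 : (∫ t in t₀..1, φ t) ≤ M / c' := by
      have hint2 : IntervalIntegrable (fun t => M * Real.exp (c'*(t-1)))
          MeasureTheory.volume t₀ 1 :=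
        (continuous_const.mul (Real.continuous_exp.comp
          (continuous_const.mul (continuous_id.sub continuous_const)))).intervalIntegrable _ _
      have h1 := intervalIntegral.integral_mono_on (a := t₀) (b := 1) ht₀1
        hi2 hint2 hφb2
      have h2 : (∫ t in t₀..1, M * Real.exp (c'*(t-1))) = M * ∫ t in t₀..1, Real.exp (c'*(t-1)) :=
        intervalIntegral.integral_const_mul _ _
      have h3 := stmt7_int_exp (t₀ := t₀) hc'
      calc (∫ t in t₀..1, φ t) ≤ M * ∫ t in t₀..1, Real.exp (c'*(t-1)) := by rw [← h2]; exact h1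
        _ ≤ M * (1/c') := mul_le_mul_of_nonneg_left h3 hM0
        _ = M / c' := by ring
    -- assemble
    have hfz : ‖f z‖ ≤ ‖f 0‖ + R * (S * K₁) + M / c' := by
      rw [hsplit] at hInt
      linarith
    rw [hexp_eq]
    have hMc : M / c' * Real.exp (((a*z^2+b*z+c)/lam).re - psi m z) ≤ 4/δ * S := by
      have e2 : M / c' * Real.exp (((a*z^2+b*z+c)/lam).re - psi m z) = S * r * (1+r) / c' := by
        rw [hMdef]
        exact stmt7_exp_div _ _ _ _
      rw [e2, hc'def]
      rw [div_le_iff₀ (by linarith [mul_pos hδ (pow_pos hrpos 2)] : (0:ℝ) < δ * r^2 / 2)]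
      have hr1 : 1 ≤ r := le_trans hR1 hz.le
      have h2r : S*r*(1+r) ≤ 2*S*r^2 := by
        linarith [mul_nonneg (mul_nonneg hS0 hrpos.le) (by linarith : (0:ℝ) ≤ r - 1)]
      have heq : 4/δ*S*(δ*r^2/2) = 2*S*r^2 := by
        field_simp
        ring
      linarith
    calc ‖f z‖ * Real.exp (((a*z^2+b*z+c)/lam).re - psi m z)
        ≤ (‖f 0‖ + R * (S * K₁) + M / c') *
            Real.exp (((a*z^2+b*z+c)/lam).re - psi m z) :=
          mul_le_mul_of_nonneg_right hfz (Real.exp_nonneg _)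
      _ = (‖f 0‖ + R * (S * K₁)) * Real.exp (((a*z^2+b*z+c)/lam).re - psi m z)
            + M / c' * Real.exp (((a*z^2+b*z+c)/lam).re - psi m z) := by ring
      _ ≤ (‖f 0‖ + R * (S * K₁)) * Real.exp lnM + 4/δ * S := by
          have h1 : 0 ≤ ‖f 0‖ + R * (S * K₁) :=
            add_nonneg habsf0 (mul_nonneg hRpos.le (mul_nonneg hS0 hK₁.le))
          have h11 := mul_le_mul_of_nonneg_left hMz h1
          linarith [hMc]
      _ ≤ C * (‖f 0‖ + S) := by
          rw [hCdef]
          linarith [stmt7_combine hexpM (mul_nonneg hRpos.le hK₁.le) h4δ.le habsf0 hS0]
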